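/- If the per-level reconstruction errors satisfy the recursion x_l − x̂_l = δy_l + P_l(x_{l+1} − x̂_{l+1} − ε_{l+1}) + ε_l with ‖ε_l‖_∞ ≤ eb and each P_l has L∞ operator norm at most p ≥ 1, then the total error at the finest level is bounded by ∑_{l=0}^{L-1} p^l ‖δy_{l+1}‖_∞ + eb, where the propagated-loss terms compound geometrically through successive predictions. -/

import Mathlib

/-- If per-level reconstruction errors satisfy the recursion
`x l − xhat l = δy l + P l (x (l+1) − xhat (l+1) − ε (l+1)) + ε l` for `1 ≤ l < L`,
with top level `x L − xhat L = δy L + ε L`, quantization errors `‖ε l‖_∞ ≤ eb`, and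
each linear predictor `P l` of L∞ operator norm at most `p ≥ 1`, then the total error
at the finest level is bounded by `∑_{l=0}^{L-1} p^l ‖δy (l+1)‖_∞ + eb`. -/
theorem stmt_7 (n L : ℕ) (hL : 1 ≤ L) (p eb : ℝ) (hp : 1 ≤ p)
    (x xhat δy ε : ℕ → (Fin n → ℝ))
    (P : ℕ → (Fin n → ℝ) →ₗ[ℝ] (Fin n → ℝ))
    (hP : ∀ l (v : Fin n → ℝ), ‖P l v‖ ≤ p * ‖v‖)
    (hε : ∀ l, ‖ε l‖ ≤ eb)
    (hrec : ∀ l, 1 ≤ l → l < L →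
      x l - xhat l = δy l + P l (x (l + 1) - xhat (l + 1) - ε (l + 1)) + ε l)
    (htop : x L - xhat L = δy L + ε L) :
    ‖x 1 - xhat 1‖ ≤ (∑ l ∈ Finset.range L, p ^ l * ‖δy (l + 1)‖) + eb := by
  have hp0 : (0:ℝ) ≤ p := le_trans zero_le_one hp
  have key : ∀ m l, l + m = L → 1 ≤ l →
      ‖x l - xhat l - ε l‖ ≤ ∑ k ∈ Finset.range (m + 1), p ^ k * ‖δy (l + k)‖ := by
    intro m
    induction m with
    | zero =>
      intro l hl _
      have hlL : l = L := by omega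
      subst hlL
      have h : x l - xhat l - ε l = δy l := by rw [htop]; abel
      rw [h]
      simp
    | succ m ih =>
      intro l hl hl1
      have hlt : l < L := by omega
      have h1 : x l - xhat l - ε l
          = δy l + P l (x (l + 1) - xhat (l + 1) - ε (l + 1)) := by
        rw [hrec l hl1 hlt]; abel
      have ih' := ih (l + 1) (by omega) (by omega)
      calc ‖x l - xhat l - ε l‖
          ≤ ‖δy l‖ + ‖P l (x (l + 1) - xhat (l + 1) - ε (l + 1))‖ := by
            rw [h1]; exact norm_add_le _ _
        _ ≤ ‖δy l‖ + p * ‖x (l + 1) - xhat (l + 1) - ε (l + 1)‖ :=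
            add_le_add le_rfl (hP _ _)
        _ ≤ ‖δy l‖ + p * ∑ k ∈ Finset.range (m + 1), p ^ k * ‖δy (l + 1 + k)‖ := by
            gcongr
        _ = ∑ k ∈ Finset.range (m + 1 + 1), p ^ k * ‖δy (l + k)‖ := by
            rw [Finset.sum_range_succ' (fun k => p ^ k * ‖δy (l + k)‖) (m + 1),
              Finset.mul_sum]
            simp only [pow_zero, one_mul, add_zero]
            rw [add_comm]
            congr 1
            apply Finset.sum_congr rfl
            intro k _
            have h2 : l + (k + 1) = l + 1 + k := by omega
            rw [h2]; ring
  have h1 := key (L - 1) 1 (by omega) le_rfl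
  have hL1 : L - 1 + 1 = L := by omega
  rw [hL1] at h1
  have h2 : ‖x 1 - xhat 1‖ ≤ ‖x 1 - xhat 1 - ε 1‖ + ‖ε 1‖ := by
    have := norm_add_le (x 1 - xhat 1 - ε 1) (ε 1)
    simpa using this
  have h3 : (∑ k ∈ Finset.range L, p ^ k * ‖δy (1 + k)‖)
      = ∑ l ∈ Finset.range L, p ^ l * ‖δy (l + 1)‖ := by
    apply Finset.sum_congr rfl
    intro k _
    rw [add_comm 1 k]
  calc ‖x 1 - xhat 1‖ ≤ ‖x 1 - xhat 1 - ε 1‖ + ‖ε 1‖ := h2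
    _ ≤ (∑ l ∈ Finset.range L, p ^ l * ‖δy (l + 1)‖) + eb := by
        rw [← h3]; exact add_le_add h1 (hε 1)
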